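/- Let F be a finite field with n elements and R = M₂(F), and let G be the graph on the nontrivial idempotents of R with adjacency e ~ f iff e ≠ f and (ef = 0 or fe = 0). Then the Wiener index of G, defined as the sum of d(u,v) over all unordered pairs of distinct vertices, equals (1/2)(n² + n)(2n² − 1). -/

import Mathlib

set_option linter.unusedSectionVars false
set_option maxHeartbeats 1000000

namespace Stmt18Aux
open Matrix

variable {F : Type*} [Field F] [DecidableEq F] [Fintype F]

def vv (o : Option F) : Fin 2 → F := Option.elim o ![0,1] (fun t => ![1,t])

def ww (p : Option F × F) : Fin 2 → F :=
  Option.elim p.1 ![p.2,1] (fun t => ![1 - p.2*t, p.2])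

def D (p q : Option F × F) : F := ww p ⬝ᵥ vv q.1

def mat (p : Option F × F) : Matrix (Fin 2) (Fin 2) F :=
  Matrix.vecMulVec (vv p.1) (ww p)

@[simp] lemma vv_s0 (t : F) : vv (some t) 0 = 1 := rfl
@[simp] lemma vv_s1 (t : F) : vv (some t) 1 = t := rfl
@[simp] lemma vv_n0 : vv (none : Option F) 0 = 0 := rfl
@[simp] lemma vv_n1 : vv (none : Option F) 1 = 1 := rfl
@[simp] lemma ww_s0 (t s : F) : ww (some t, s) 0 = 1 - s*t := rfl
@[simp] lemma ww_s1 (t s : F) : ww (some t, s) 1 = s := rfl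
@[simp] lemma ww_n0 (s : F) : ww ((none : Option F), s) 0 = s := rfl
@[simp] lemma ww_n1 (s : F) : ww ((none : Option F), s) 1 = 1 := rfl

lemma D_same_fst (o : Option F) (s s' : F) : D (o, s) (o, s') = 1 := by
  rcases o with _ | t <;>
    simp [D, vv, ww, dotProduct, Fin.sum_univ_two]

lemma D_self (p : Option F × F) : D p p = 1 := by
  obtain ⟨o, s⟩ := p; exact D_same_fst o s s

lemma mat_mul (p q : Option F × F) :
    mat p * mat q = D p q • Matrix.vecMulVec (vv p.1) (ww q) := by
  ext i j
  simp [mat, D, Matrix.vecMulVec, Matrix.mul_apply, dotProduct,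
    Fin.sum_univ_two, Matrix.smul_apply]
  ring

lemma mat_idem (p : Option F × F) : mat p * mat p = mat p := by
  rw [mat_mul, D_self, one_smul]; rfl

lemma vv_ne_zero (o : Option F) : ∃ i, vv o i = 1 := by
  rcases o with _ | t
  · exact ⟨1, rfl⟩
  · exact ⟨0, rfl⟩

lemma ww_ne_zero (p : Option F × F) : ∃ j, ww p j ≠ 0 := by
  obtain ⟨o, s⟩ := p
  rcases o with _ | t
  · exact ⟨1, one_ne_zero⟩
  · by_cases hs : s = 0
    · exact ⟨0, by simp [ww, hs]⟩
    · exact ⟨1, hs⟩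

lemma mat_mul_eq_zero_iff (p q : Option F × F) : mat p * mat q = 0 ↔ D p q = 0 := by
  rw [mat_mul]
  constructor
  · intro h
    by_contra hD
    obtain ⟨i, hi⟩ := vv_ne_zero p.1
    obtain ⟨j, hj⟩ := ww_ne_zero q
    have := congrFun (congrFun h i) j
    simp [Matrix.vecMulVec, hi, Matrix.smul_apply] at this
    tauto
  · intro h; rw [h, zero_smul]

lemma mat_ne_zero (p : Option F × F) : mat p ≠ 0 := by
  intro h
  have h1 : mat p * mat p = 0 := by rw [h]; simp
  rw [mat_mul_eq_zero_iff, D_self p] at h1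
  exact one_ne_zero h1

lemma mat_det (p : Option F × F) : mat p 0 0 * mat p 1 1 = mat p 0 1 * mat p 1 0 := by
  simp [mat, Matrix.vecMulVec]; ring

lemma mat_ne_one (p : Option F × F) : mat p ≠ 1 := by
  intro h
  have := mat_det p
  rw [h] at this
  simp [Matrix.one_apply] at this

lemma mat_injective : Function.Injective (mat (F := F)) := by
  rintro ⟨o, s⟩ ⟨o', s'⟩ h
  have he : ∀ i j, vv o i * ww (o, s) j = vv o' i * ww (o', s') j := by
    intro i j
    have := congrFun (congrFun h i) j
    simpa [mat, Matrix.vecMulVec] using this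
  rcases o with _ | t <;> rcases o' with _ | t'
  · -- none none
    have h1 := he 1 0
    simp only [vv_n1, ww_n0, one_mul] at h1
    rw [h1]
  · -- none some
    have h1 := he 0 0
    have h2 := he 0 1
    simp only [vv_n0, vv_s0, ww_n0, ww_s0, ww_n1, ww_s1, zero_mul, one_mul] at h1 h2
    exfalso
    rw [← h2] at h1
    simp at h1
  · -- some none
    have h1 := he 0 0
    have h2 := he 0 1
    simp only [vv_n0, vv_s0, ww_n0, ww_s0, ww_n1, ww_s1, zero_mul, one_mul] at h1 h2
    exfalso
    rw [h2] at h1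
    simp at h1
  · -- some some
    have h01 := he 0 1
    simp only [vv_s0, ww_s1, one_mul] at h01
    subst h01
    by_cases hs0 : s = 0
    · subst hs0
      have h10 := he 1 0
      simp only [vv_s1, ww_s0] at h10
      simp at h10
      rw [h10]
    · have h00 := he 0 0
      simp only [vv_s0, ww_s0, one_mul] at h00
      have h00' : s*t = s*t' := by linear_combination -h00
      have : t = t' := mul_left_cancel₀ hs0 h00'
      rw [this]


lemma idem_scalar {a : F} (h : a * a = a) : a = 0 ∨ a = 1 := by
  have h2 : a * (a - 1) = 0 := by linear_combination h
  rcases mul_eq_zero.mp h2 with h' | h'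
  · exact Or.inl h'
  · exact Or.inr (by linear_combination h')

lemma trace_eq_one {A : Matrix (Fin 2) (Fin 2) F} (hA : A * A = A) (h0 : A ≠ 0) (h1 : A ≠ 1) :
    A 0 0 + A 1 1 = 1 := by
  have key : ∀ i j, A i 0 * A 0 j + A i 1 * A 1 j = A i j := by
    intro i j
    have := congrFun (congrFun hA i) j
    simpa [Matrix.mul_apply, Fin.sum_univ_two] using this
  have e00 := key 0 0
  have e01 := key 0 1
  have e10 := key 1 0
  have e11 := key 1 1
  by_cases hb : A 0 1 = 0
  · by_cases hc : A 1 0 = 0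
    · have ha : A 0 0 * A 0 0 = A 0 0 := by linear_combination e00 - A 0 1 * hc
      have ha' := idem_scalar ha
      have hd : A 1 1 * A 1 1 = A 1 1 := by linear_combination e11 - A 1 0 * hb
      have hd' := idem_scalar hd
      rcases ha' with h | h <;> rcases hd' with h' | h'
      · exfalso; apply h0
        ext i j
        fin_cases i <;> fin_cases j
        · simpa using h
        · simpa using hb
        · simpa using hc
        · simpa using h'
      · rw [h, h']; ring
      · rw [h, h']; ring
      · exfalso; apply h1
        ext i j
        fin_cases i <;> fin_cases j
        · simpa [Matrix.one_apply] using h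
        · simpa [Matrix.one_apply] using hb
        · simpa [Matrix.one_apply] using hc
        · simpa [Matrix.one_apply] using h'
    · have : A 1 0 * (A 0 0 + A 1 1 - 1) = 0 := by linear_combination e10
      rcases mul_eq_zero.mp this with h | h
      · exact absurd h hc
      · linear_combination h
  · have : A 0 1 * (A 0 0 + A 1 1 - 1) = 0 := by linear_combination e01
    rcases mul_eq_zero.mp this with h | h
    · exact absurd h hb
    · linear_combination h

lemma mat_surjective {A : Matrix (Fin 2) (Fin 2) F} (hA : A * A = A) (h0 : A ≠ 0) (h1 : A ≠ 1) :
    ∃ p : Option F × F, mat p = A := by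
  have key : ∀ i j, A i 0 * A 0 j + A i 1 * A 1 j = A i j := by
    intro i j
    have := congrFun (congrFun hA i) j
    simpa [Matrix.mul_apply, Fin.sum_univ_two] using this
  have e00 := key 0 0
  have htr := trace_eq_one hA h0 h1
  by_cases ha : A 0 0 = 0
  · by_cases hc : A 1 0 = 0
    · by_cases hb : A 0 1 = 0
      · refine ⟨(none, 0), ?_⟩
        ext i j
        fin_cases i <;> fin_cases j <;>
          simp [mat, Matrix.vecMulVec, vv, ww]
        · exact ha.symm
        · exact hb.symm
        · exact hc.symm
        · linear_combination -htr + ha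
      · refine ⟨(some (A 0 1)⁻¹, A 0 1), ?_⟩
        ext i j
        fin_cases i <;> fin_cases j <;>
          simp [mat, Matrix.vecMulVec, vv, ww]
        · rw [mul_inv_cancel₀ hb]; linear_combination -ha
        · rw [mul_inv_cancel₀ hb]; simp [hc]
        · rw [inv_mul_cancel₀ hb]; linear_combination -htr + ha
    · have hb : A 0 1 = 0 := by
        have hbc : A 0 1 * A 1 0 = 0 := by linear_combination e00 + (1 - A 0 0) * ha
        rcases mul_eq_zero.mp hbc with h | h
        · exact h
        · exact absurd h hc
      refine ⟨(none, A 1 0), ?_⟩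
      ext i j
      fin_cases i <;> fin_cases j <;>
        simp [mat, Matrix.vecMulVec, vv, ww]
      · exact ha.symm
      · exact hb.symm
      · linear_combination -htr + ha
  · refine ⟨(some (A 1 0 / A 0 0), A 0 1), ?_⟩
    have hbc : A 0 1 * A 1 0 = A 0 0 * A 1 1 := by linear_combination e00 - A 0 0 * htr
    ext i j
    fin_cases i <;> fin_cases j <;>
      simp [mat, Matrix.vecMulVec, vv, ww]
    · field_simp
      linear_combination -e00
    · field_simp
      linear_combination (-A 1 0) * e00
    · field_simp
      linear_combination hbc


def Dv (p : Option F × F) (o : Option F) : F := ww p ⬝ᵥ vv o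

lemma D_eq_Dv (p q : Option F × F) : D p q = Dv p q.1 := rfl

@[simp] lemma Dv_ss (t s t' : F) : Dv (some t, s) (some t') = 1 - s*t + s*t' := by
  simp [Dv, dotProduct, Fin.sum_univ_two]
@[simp] lemma Dv_sn (t s : F) : Dv (some t, s) none = s := by
  simp [Dv, dotProduct, Fin.sum_univ_two]
@[simp] lemma Dv_ns (s t' : F) : Dv ((none : Option F), s) (some t') = s + t' := by
  simp [Dv, dotProduct, Fin.sum_univ_two]
@[simp] lemma Dv_nn (s : F) : Dv ((none : Option F), s) none = 1 := by
  simp [Dv, dotProduct, Fin.sum_univ_two]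

lemma Dv_same (o : Option F) (s : F) : Dv (o, s) o = 1 := D_same_fst o s s

lemma L1 (p : Option F × F) : ∃! o : Option F, Dv p o = 0 := by
  obtain ⟨o, s⟩ := p
  rcases o with _ | t
  · refine ⟨some (-s), by simp, ?_⟩
    rintro (_ | t'') h
    · simp only [Dv_nn] at h; exact absurd h one_ne_zero
    · simp only [Dv_ns] at h
      have ht : t'' = -s := by linear_combination h
      rw [ht]
  · by_cases hs : s = 0
    · subst hs
      refine ⟨none, by simp, ?_⟩
      rintro (_ | t'') h
      · rfl
      · simp only [Dv_ss] at h
        exfalso; simp at h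
    · refine ⟨some (t - s⁻¹), ?_, ?_⟩
      · show Dv (some t, s) (some (t - s⁻¹)) = 0
        rw [Dv_ss]
        linear_combination -mul_inv_cancel₀ hs
      · rintro (_ | t'') h
        · simp only [Dv_sn] at h; exact absurd h hs
        · simp only [Dv_ss] at h
          have h2 : s * t'' = s * (t - s⁻¹) := by
            linear_combination h + mul_inv_cancel₀ hs
          have ht : t'' = t - s⁻¹ := mul_left_cancel₀ hs h2
          rw [ht]

lemma L2 {o o' : Option F} (hne : o' ≠ o) : ∃! s : F, Dv (o', s) o = 0 := by
  rcases o with _ | t <;> rcases o' with _ | t'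
  · exact absurd rfl hne
  · exact ⟨0, by simp, fun s h => by simpa only [Dv_sn] using h⟩
  · refine ⟨-t, by simp, ?_⟩
    intro s h; simp only [Dv_ns] at h; linear_combination h
  · have htt : t - t' ≠ 0 := sub_ne_zero.mpr fun h => hne (by rw [h])
    refine ⟨-(t - t')⁻¹, ?_, ?_⟩
    · show Dv (some t', -(t - t')⁻¹) (some t) = 0
      rw [Dv_ss]
      linear_combination -mul_inv_cancel₀ htt
    · intro s h; simp only [Dv_ss] at h
      have h2 : s * (t - t') = (-(t-t')⁻¹) * (t - t') := by
        linear_combination h + inv_mul_cancel₀ htt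
      exact mul_right_cancel₀ htt h2


lemma Dv_self' (q : Option F × F) : Dv q q.1 = 1 := Dv_same q.1 q.2

lemma cardA (p : Option F × F) :
    (Finset.univ.filter fun q : Option F × F => D p q = 0).card = Fintype.card F := by
  obtain ⟨o₀, h₀, huniq⟩ := L1 p
  have hset : (Finset.univ.filter fun q : Option F × F => D p q = 0)
      = ({o₀} : Finset (Option F)) ×ˢ (Finset.univ : Finset F) := by
    ext q
    simp only [Finset.mem_filter, Finset.mem_univ, true_and, Finset.mem_product,
      Finset.mem_singleton, and_true]
    simp only [D_eq_Dv]
    constructor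
    · intro h; exact huniq q.1 h
    · intro h; rw [h]; exact h₀
  rw [hset, Finset.card_product, Finset.card_singleton, Finset.card_univ, one_mul]

lemma cardB (p : Option F × F) :
    (Finset.univ.filter fun q : Option F × F => D q p = 0).card = Fintype.card F := by
  have h := Finset.card_bij (fun (q : Option F × F) _ => q.1)
    (s := Finset.univ.filter fun q : Option F × F => D q p = 0)
    (t := Finset.univ.filter fun o : Option F => o ≠ p.1)
    ?_ ?_ ?_
  · rw [h]
    rw [Finset.filter_ne', Finset.card_erase_of_mem (Finset.mem_univ _), Finset.card_univ,
      Fintype.card_option]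
    simp
  · intro q hq
    simp only [Finset.mem_filter, Finset.mem_univ, true_and] at hq ⊢
    simp only [D_eq_Dv] at hq
    intro hcontra
    rw [← hcontra, Dv_self'] at hq
    exact one_ne_zero hq
  · intro q hq r hr hqr
    simp only [Finset.mem_filter, Finset.mem_univ, true_and] at hq hr
    simp only [D_eq_Dv] at hq hr
    have hne : q.1 ≠ p.1 := by
      intro hcontra
      rw [← hcontra, Dv_self'] at hq
      exact one_ne_zero hq
    obtain ⟨s₀, -, hu⟩ := L2 hne
    have h1 : q.2 = s₀ := hu q.2 hq
    have h2 : r.2 = s₀ := hu r.2 (by show Dv (q.1, r.2) p.1 = 0; rw [hqr]; exact hr)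
    exact Prod.ext hqr (h1.trans h2.symm)
  · intro o ho
    simp only [Finset.mem_filter, Finset.mem_univ, true_and] at ho
    obtain ⟨s₀, hs₀, -⟩ := L2 ho
    refine ⟨(o, s₀), ?_, rfl⟩
    simp only [Finset.mem_filter, Finset.mem_univ, true_and]
    simp only [D_eq_Dv]
    exact hs₀

lemma cardAB (p : Option F × F) :
    (Finset.univ.filter fun q : Option F × F => D p q = 0 ∧ D q p = 0).card = 1 := by
  obtain ⟨o₀, h₀, hu₀⟩ := L1 p
  have ho : o₀ ≠ p.1 := by
    intro h
    rw [h, Dv_self'] at h₀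
    exact one_ne_zero h₀
  obtain ⟨s₀, hs₀, hu₁⟩ := L2 ho
  have hset : (Finset.univ.filter fun q : Option F × F => D p q = 0 ∧ D q p = 0)
      = {(o₀, s₀)} := by
    ext q
    simp only [Finset.mem_filter, Finset.mem_univ, true_and, Finset.mem_singleton]
    simp only [D_eq_Dv]
    constructor
    · rintro ⟨h1, h2⟩
      have hq1 : q.1 = o₀ := hu₀ q.1 h1
      have hq2 : q.2 = s₀ := hu₁ q.2 (by show Dv (o₀, q.2) p.1 = 0; rw [← hq1]; exact h2)
      exact Prod.ext hq1 hq2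
    · rintro rfl
      exact ⟨h₀, hs₀⟩
  rw [hset, Finset.card_singleton]

lemma card_deg (p : Option F × F) :
    (Finset.univ.filter fun q : Option F × F => D p q = 0 ∨ D q p = 0).card
      = 2 * Fintype.card F - 1 := by
  have key := Finset.card_union_add_card_inter
    (Finset.univ.filter fun q : Option F × F => D p q = 0)
    (Finset.univ.filter fun q : Option F × F => D q p = 0)
  rw [← Finset.filter_or, ← Finset.filter_and, cardA, cardB, cardAB] at key
  omega

lemma dist2_witness (p q : Option F × F) (hD1 : D p q ≠ 0) (hD2 : D q p ≠ 0) :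
    ∃ g, (D p g = 0 ∨ D g p = 0) ∧ (D g q = 0 ∨ D q g = 0) ∧ g ≠ p ∧ g ≠ q := by
  obtain ⟨o₀, h₀, -⟩ := L1 p
  have ho : o₀ ≠ q.1 := by
    intro h
    rw [h] at h₀
    exact hD1 (by rw [D_eq_Dv]; exact h₀)
  obtain ⟨s₀, hs₀, -⟩ := L2 ho
  refine ⟨(o₀, s₀), Or.inl (by rw [D_eq_Dv]; exact h₀),
    Or.inl (by rw [D_eq_Dv]; exact hs₀), ?_, ?_⟩
  · intro h
    apply hD1
    rw [D_eq_Dv, ← h]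
    exact hs₀
  · intro h
    rw [h, Dv_self'] at hs₀
    exact one_ne_zero hs₀

end Stmt18Aux

open Stmt18Aux in
theorem stmt_18 (F : Type*) [Field F] [Fintype F] [DecidableEq F] (n : ℕ) (hn : Fintype.card F = n)
    (G : SimpleGraph {A : Matrix (Fin 2) (Fin 2) F // A * A = A ∧ A ≠ 0 ∧ A ≠ 1})
    (hG : ∀ e f, G.Adj e f ↔ e ≠ f ∧ ((e : Matrix (Fin 2) (Fin 2) F) * f = 0 ∨
      (f : Matrix (Fin 2) (Fin 2) F) * e = 0)) :
    (1 / 2 : ℚ) * ∑ u : {A : Matrix (Fin 2) (Fin 2) F // A * A = A ∧ A ≠ 0 ∧ A ≠ 1},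
        ∑ v : {A : Matrix (Fin 2) (Fin 2) F // A * A = A ∧ A ≠ 0 ∧ A ≠ 1},
          (G.dist u v : ℚ) =
      (1 / 2 : ℚ) * ((n : ℚ) ^ 2 + n) * (2 * (n : ℚ) ^ 2 - 1) := by
  classical
  let Φ : Option F × F → {A : Matrix (Fin 2) (Fin 2) F // A * A = A ∧ A ≠ 0 ∧ A ≠ 1} :=
    fun p => ⟨mat p, mat_idem p, mat_ne_zero p, mat_ne_one p⟩
  have hΦinj : Function.Injective Φ := fun p q h => mat_injective (congrArg Subtype.val h)
  have hΦsurj : Function.Surjective Φ := by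
    rintro ⟨A, hA, h0, h1⟩
    obtain ⟨p, hp⟩ := mat_surjective hA h0 h1
    exact ⟨p, Subtype.ext hp⟩
  have hΦbij : Function.Bijective Φ := ⟨hΦinj, hΦsurj⟩
  have hAdj : ∀ p q, G.Adj (Φ p) (Φ q) ↔ p ≠ q ∧ (D p q = 0 ∨ D q p = 0) := by
    intro p q
    rw [hG]
    constructor
    · rintro ⟨hne, h⟩
      refine ⟨fun h' => hne (by rw [h']), ?_⟩
      rcases h with h | h
      · exact Or.inl ((mat_mul_eq_zero_iff p q).mp h)
      · exact Or.inr ((mat_mul_eq_zero_iff q p).mp h)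
    · rintro ⟨hne, h⟩
      refine ⟨fun h' => hne (hΦinj h'), ?_⟩
      rcases h with h | h
      · exact Or.inl ((mat_mul_eq_zero_iff p q).mpr h)
      · exact Or.inr ((mat_mul_eq_zero_iff q p).mpr h)
  have hdist : ∀ p q, (G.dist (Φ p) (Φ q) : ℚ)
      = if p = q then 0 else if (D p q = 0 ∨ D q p = 0) then 1 else 2 := by
    intro p q
    by_cases hpq : p = q
    · subst hpq; simp [SimpleGraph.dist_self]
    · rw [if_neg hpq]
      by_cases hadj : D p q = 0 ∨ D q p = 0
      · rw [if_pos hadj]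
        have h1 : G.dist (Φ p) (Φ q) = 1 :=
          SimpleGraph.dist_eq_one_iff_adj.mpr ((hAdj p q).mpr ⟨hpq, hadj⟩)
        rw [h1]; norm_num
      · rw [if_neg hadj]
        push_neg at hadj
        obtain ⟨g, hg1, hg2, hgp, hgq⟩ := dist2_witness p q hadj.1 hadj.2
        have a1 : G.Adj (Φ p) (Φ g) := (hAdj p g).mpr ⟨fun h => hgp h.symm, hg1⟩
        have a2 : G.Adj (Φ g) (Φ q) := (hAdj g q).mpr ⟨hgq, hg2⟩
        have hw : G.dist (Φ p) (Φ q) ≤ 2 := by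
          have := SimpleGraph.dist_le
            (SimpleGraph.Walk.cons a1 (SimpleGraph.Walk.cons a2 SimpleGraph.Walk.nil))
          simpa using this
        have hne' : Φ p ≠ Φ q := fun h => hpq (hΦinj h)
        have hpos : 0 < G.dist (Φ p) (Φ q) := SimpleGraph.Reachable.pos_dist_of_ne
          ⟨SimpleGraph.Walk.cons a1 (SimpleGraph.Walk.cons a2 SimpleGraph.Walk.nil)⟩ hne'
        have hne1 : G.dist (Φ p) (Φ q) ≠ 1 := by
          intro h
          have hA' := SimpleGraph.dist_eq_one_iff_adj.mp h
          rw [hAdj] at hA'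
          rcases hA'.2 with h' | h'
          · exact hadj.1 h'
          · exact hadj.2 h'
        have h2 : G.dist (Φ p) (Φ q) = 2 := by omega
        rw [h2]; norm_num
  have hsum : (∑ u : {A : Matrix (Fin 2) (Fin 2) F // A * A = A ∧ A ≠ 0 ∧ A ≠ 1},
        ∑ v : {A : Matrix (Fin 2) (Fin 2) F // A * A = A ∧ A ≠ 0 ∧ A ≠ 1}, (G.dist u v : ℚ))
      = ∑ p : Option F × F, ∑ q : Option F × F, (G.dist (Φ p) (Φ q) : ℚ) := by
    rw [← hΦbij.sum_comp (fun u => ∑ v, (G.dist u v : ℚ))]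
    exact Finset.sum_congr rfl fun p _ =>
      (hΦbij.sum_comp (fun v => (G.dist (Φ p) v : ℚ))).symm
  have hN1 : 1 ≤ Fintype.card F := Fintype.card_pos
  have hcardΩ : Fintype.card (Option F × F) = (Fintype.card F + 1) * Fintype.card F := by
    rw [Fintype.card_prod, Fintype.card_option]
  have hinner : ∀ p : Option F × F, ∑ q : Option F × F, (G.dist (Φ p) (Φ q) : ℚ)
      = 2 * ((Fintype.card F + 1) * Fintype.card F) - 2 - (2 * Fintype.card F - 1) := by
    intro p
    have hpt : ∀ q, (G.dist (Φ p) (Φ q) : ℚ)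
        = 2 - (if p = q then 2 else 0) - (if (D p q = 0 ∨ D q p = 0) then 1 else 0) := by
      intro q
      rw [hdist]
      by_cases h1 : p = q
      · subst h1
        rw [if_pos rfl, if_pos rfl, if_neg]
        · norm_num
        · rw [D_self]
          simp
      · rw [if_neg h1, if_neg h1]
        by_cases h2 : (D p q = 0 ∨ D q p = 0) <;> simp [h2] <;> norm_num
    rw [Finset.sum_congr rfl (fun q _ => hpt q), Finset.sum_sub_distrib, Finset.sum_sub_distrib]
    have e1 : ∑ _q : Option F × F, (2:ℚ) = ((Fintype.card F + 1) * Fintype.card F : ℕ) * 2 := by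
      rw [Finset.sum_const, Finset.card_univ, hcardΩ, nsmul_eq_mul]
    have e2 : ∑ q : Option F × F, (if p = q then (2:ℚ) else 0) = 2 := by
      rw [Finset.sum_ite_eq]
      simp
    have e3 : ∑ q : Option F × F, (if (D p q = 0 ∨ D q p = 0) then (1:ℚ) else 0)
        = ((2 * Fintype.card F - 1 : ℕ) : ℚ) := by
      rw [Finset.sum_boole, card_deg]
    rw [e1, e2, e3]
    have : ((2 * Fintype.card F - 1 : ℕ) : ℚ) = 2 * Fintype.card F - 1 := by
      have h2N : 1 ≤ 2 * Fintype.card F := by omega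
      push_cast [Nat.cast_sub h2N]
      ring
    rw [this]
    push_cast
    ring
  rw [hsum, Finset.sum_congr rfl (fun p _ => hinner p), Finset.sum_const, Finset.card_univ,
    hcardΩ, nsmul_eq_mul, hn]
  push_cast
  ring
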